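/- Let R be a Dedekind domain, let a ∈ R \ {0}, and let M be an R-module such that M/aM is finite. Let h : M → ℝ_{≥0} satisfy: (i) h(x ± y) ≤ h(x) + h(y) for all x, y ∈ M; (iv) h(a·x) ≥ 4·h(x) for all x ∈ M; and assume that for every D > 0 the set {x ∈ M : h(x) ≤ D} is finite. Then M is a finitely generated R-module. -/
import Mathlib


/-- **Descent step.** Let `R` be a Dedekind domain, `a : R` nonzero, and `M` an `R`-module
such that `M / aM` is finite. Suppose `h : M → ℝ≥0` satisfies the triangle inequality and
`h (a • x) ≥ 4 h x`, and that every sublevel set `{x | h x ≤ D}` (for `D > 0`) is finite.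
Then `M` is a finitely generated `R`-module. -/
theorem finitely_generated_of_descent
    (R : Type*) [CommRing R] [IsDomain R] [IsDedekindDomain R]
    (a : R) (ha : a ≠ 0)
    (M : Type*) [AddCommGroup M] [Module R M]
    -- `M / aM` is finite
    (hfinquot : Finite (M ⧸ LinearMap.range (LinearMap.lsmul R M a)))
    -- the height function, with values in `ℝ≥0`
    (h : M → ℝ) (h0 : ∀ x : M, 0 ≤ h x)
    -- (i) triangle inequality
    (hadd : ∀ x y : M, h (x + y) ≤ h x + h y)
    (hsub : ∀ x y : M, h (x - y) ≤ h x + h y)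
    -- (iv) `h (a • x) ≥ 4 h x`
    (hquad : ∀ x : M, 4 * h x ≤ h (a • x))
    -- sublevel sets of `h` are finite
    (hfin : ∀ D : ℝ, 0 < D → {x : M | h x ≤ D}.Finite) :
    Module.Finite R M := by
  classical
  set N := LinearMap.range (LinearMap.lsmul R M a) with hNdef
  have hsurj : Function.Surjective N.mkQ := Submodule.mkQ_surjective N
  obtain ⟨f, hf⟩ := hsurj.hasRightInverse
  obtain ⟨C₀, hC₀⟩ := (Set.finite_range (h ∘ f)).bddAbove
  set C := max C₀ 2 with hCdef
  have hC2 : (2:ℝ) ≤ C := le_max_right _ _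
  have hCb : ∀ z, h (f z) ≤ C := fun z =>
    le_trans (hC₀ ⟨z, rfl⟩) (le_max_left _ _)
  set S := {x : M | h x ≤ C} with hSdef
  have hSfin : S.Finite := hfin C (by linarith)
  have key : ∀ x : M, ∃ q y : M, h q ≤ C ∧ x = a • y + q ∧ 4 * h y ≤ h x + C := by
    intro x
    have hmem : x - f (N.mkQ x) ∈ N := by
      rw [← Submodule.Quotient.mk_eq_zero]
      have : N.mkQ (x - f (N.mkQ x)) = 0 := by
        rw [map_sub, hf (N.mkQ x), sub_self]
      simpa using this
    obtain ⟨y, hy⟩ := hmem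
    refine ⟨f (N.mkQ x), y, hCb _, ?_, ?_⟩
    · have : a • y = x - f (N.mkQ x) := hy
      rw [this]; abel
    · have h1 : a • y = x - f (N.mkQ x) := hy
      calc 4 * h y ≤ h (a • y) := hquad y
        _ = h (x - f (N.mkQ x)) := by rw [h1]
        _ ≤ h x + h (f (N.mkQ x)) := hsub _ _
        _ ≤ h x + C := by linarith [hCb (N.mkQ x)]
  have main : ∀ n : ℕ, ∀ x : M, h x ≤ n → x ∈ Submodule.span R S := by
    intro n
    induction n with
    | zero =>
      intro x hx
      exact Submodule.subset_span (show h x ≤ C by push_cast at hx; linarith)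
    | succ n ih =>
      intro x hx
      by_cases hxC : h x ≤ C
      · exact Submodule.subset_span hxC
      · obtain ⟨q, y, hq, hxeq, hy⟩ := key x
        push_cast at hx
        have hCn : C < (n:ℝ) + 1 := lt_of_lt_of_le (lt_of_not_ge hxC) hx
        have hyn : h y ≤ n := by linarith
        have hymem := ih y hyn
        rw [hxeq]
        exact Submodule.add_mem _ (Submodule.smul_mem _ a hymem)
          (Submodule.subset_span hq)
  have hspan : Submodule.span R S = ⊤ := by
    rw [eq_top_iff]
    intro x _
    exact main ⌈h x⌉₊ x (Nat.le_ceil _)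
  exact ⟨⟨hSfin.toFinset, by rw [Set.Finite.coe_toFinset, hspan]⟩⟩
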